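/- Let F', F_t, F_{t−1} be {1,2}-valued random variables such that the survey hypothesis F' is conditionally independent of F_t given Y and conditionally independent of F_{t−1} given Y, and F' is Bayesian informative (1 − FNR(F') − FPR(F') > 0). Then the expected market payment for closing the market with F' satisfies S̄(F_t, F') − S̄(F_{t−1}, F') = (1 − FNR(F') − FPR(F')) · (S̄(F_t, Y) − S̄(F_{t−1}, Y)); in particular, the payment is positive (respectively zero, negative) exactly when the contribution improves (respectively ties, degrades) the expected score measured against the ground truth, so closing the market with the crowdsourced survey hypothesis is incentive compatible. -/

import Mathlib

open MeasureTheory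

/-- Probability of an event, as a real number. -/
noncomputable def pr {Ω : Type*} [MeasurableSpace Ω] (μ : Measure Ω) (s : Set Ω) : ℝ :=
  (μ s).toReal

/-- A `{1,2}`-valued random label. -/
def IsBinaryLabel {Ω : Type*} (F : Ω → ℕ) : Prop :=
  ∀ ω, F ω = 1 ∨ F ω = 2

/-- False negative rate: `FNR(F) = ℙ(F=2 ∣ Y=1)`. -/
noncomputable def fnr {Ω : Type*} [MeasurableSpace Ω] (μ : Measure Ω) (F Y : Ω → ℕ) : ℝ :=
  pr μ {ω | F ω = 2 ∧ Y ω = 1} / pr μ {ω | Y ω = 1}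

/-- False positive rate: `FPR(F) = ℙ(F=1 ∣ Y=2)`. -/
noncomputable def fpr {Ω : Type*} [MeasurableSpace Ω] (μ : Measure Ω) (F Y : Ω → ℕ) : ℝ :=
  pr μ {ω | F ω = 1 ∧ Y ω = 2} / pr μ {ω | Y ω = 2}

/-- The Correlated Agreement correlation matrix:
`Δ(F,G)(k,l) = ℙ(F=k, G=l) − ℙ(F=k)·ℙ(G=l)`. -/
noncomputable def caDelta {Ω : Type*} [MeasurableSpace Ω] (μ : Measure Ω)
    (F G : Ω → ℕ) (k l : ℕ) : ℝ :=
  pr μ {ω | F ω = k ∧ G ω = l} - pr μ {ω | F ω = k} * pr μ {ω | G ω = l}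

/-- The expected Correlated Agreement score of `F` against `G`:
`S̄(F,G) = ℙ(F = G) − ℙ(F=1)ℙ(G=1) − ℙ(F=2)ℙ(G=2)`. -/
noncomputable def caScore {Ω : Type*} [MeasurableSpace Ω] (μ : Measure Ω)
    (F G : Ω → ℕ) : ℝ :=
  pr μ {ω | F ω = G ω} - pr μ {ω | F ω = 1} * pr μ {ω | G ω = 1}
    - pr μ {ω | F ω = 2} * pr μ {ω | G ω = 2}

/-- `F` and `G` are conditionally independent given `Y`:
`ℙ(F=k, G=l ∣ Y=y) = ℙ(F=k ∣ Y=y)·ℙ(G=l ∣ Y=y)` for all `k,l,y ∈ {1,2}`. -/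
def CondIndepGiven {Ω : Type*} [MeasurableSpace Ω] (μ : Measure Ω)
    (F G Y : Ω → ℕ) : Prop :=
  ∀ k l y : ℕ, k ∈ ({1, 2} : Set ℕ) → l ∈ ({1, 2} : Set ℕ) → y ∈ ({1, 2} : Set ℕ) →
    pr μ {ω | F ω = k ∧ G ω = l ∧ Y ω = y} / pr μ {ω | Y ω = y} =
      (pr μ {ω | F ω = k ∧ Y ω = y} / pr μ {ω | Y ω = y}) *
        (pr μ {ω | G ω = l ∧ Y ω = y} / pr μ {ω | Y ω = y})

section Aux
variable {Ω : Type*} [MeasurableSpace Ω] (μ : Measure Ω) [IsProbabilityMeasure μ]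

lemma pr_union_disj (s t : Set Ω) (ht : MeasurableSet t) (hd : Disjoint s t) :
    pr μ (s ∪ t) = pr μ s + pr μ t := by
  unfold pr
  rw [measure_union hd ht, ENNReal.toReal_add (measure_ne_top μ s) (measure_ne_top μ t)]

lemma meas_eq (F : Ω → ℕ) (hF : Measurable F) (k : ℕ) :
    MeasurableSet {ω | F ω = k} := hF (measurableSet_singleton k)

lemma pr_split (Y : Ω → ℕ) (hY : Measurable Y) (hYbin : IsBinaryLabel Y)
    (s : Set Ω) (hs : MeasurableSet s) :
    pr μ s = pr μ (s ∩ {ω | Y ω = 1}) + pr μ (s ∩ {ω | Y ω = 2}) := by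
  have hset : s = (s ∩ {ω | Y ω = 1}) ∪ (s ∩ {ω | Y ω = 2}) := by
    ext ω; rcases hYbin ω with h | h <;> simp [h]
  have hd : Disjoint (s ∩ {ω | Y ω = 1}) (s ∩ {ω | Y ω = 2}) := by
    rw [Set.disjoint_left]; rintro ω ⟨_, h1⟩ ⟨_, h2⟩
    simp only [Set.mem_setOf_eq] at h1 h2; omega
  conv_lhs => rw [hset]
  exact pr_union_disj μ _ _ (hs.inter (meas_eq Y hY 2)) hd

lemma ca_algebra (p q aF bF cF dF a' b' c' d' : ℝ)
    (hp : p ≠ 0) (hq : q ≠ 0) (hpq : p + q = 1)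
    (h1 : aF + cF = p) (h2 : bF + dF = q) (h3 : a' + c' = p) (h4 : b' + d' = q) :
    aF * a' / p + bF * b' / q + (cF * c' / p + dF * d' / q)
      - (aF + bF) * (a' + b') - (cF + dF) * (c' + d')
      = (1 - c' / p - b' / q) * ((aF + dF) - (aF + bF) * p - (cF + dF) * q) := by
  obtain rfl : cF = p - aF := by linarith
  obtain rfl : dF = q - bF := by linarith
  obtain rfl : c' = p - a' := by linarith
  obtain rfl : d' = q - b' := by linarith
  obtain rfl : q = 1 - p := by linarith
  field_simp
  ring

lemma ca_factor (F F' Y : Ω → ℕ)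
    (hF : Measurable F) (hF' : Measurable F') (hY : Measurable Y)
    (hFbin : IsBinaryLabel F) (hF'bin : IsBinaryLabel F') (hYbin : IsBinaryLabel Y)
    (hp : 0 < pr μ {ω | Y ω = 1}) (hplt : pr μ {ω | Y ω = 1} < 1)
    (hci : CondIndepGiven μ F F' Y) :
    caScore μ F F' = (1 - fnr μ F' Y - fpr μ F' Y) * caScore μ F Y := by
  -- basic measurable sets
  have mpair : ∀ (G H : Ω → ℕ), Measurable G → Measurable H → ∀ k y : ℕ,
      MeasurableSet {ω | G ω = k ∧ H ω = y} := fun G H hG hH k y =>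
    (meas_eq G hG k).inter (meas_eq H hH y)
  -- p + q = 1
  have hpq : pr μ {ω | Y ω = 1} + pr μ {ω | Y ω = 2} = 1 := by
    have h := pr_split μ Y hY hYbin Set.univ MeasurableSet.univ
    rw [Set.univ_inter, Set.univ_inter] at h
    have hu : pr μ Set.univ = 1 := by simp [pr]
    linarith
  have hq : 0 < pr μ {ω | Y ω = 2} := by linarith
  have hpne : pr μ {ω | Y ω = 1} ≠ 0 := ne_of_gt hp
  have hqne : pr μ {ω | Y ω = 2} ≠ 0 := ne_of_gt hq
  -- marginals of a binary G split over Y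
  have hmarg : ∀ (G : Ω → ℕ), Measurable G → ∀ k : ℕ,
      pr μ {ω | G ω = k} = pr μ {ω | G ω = k ∧ Y ω = 1} + pr μ {ω | G ω = k ∧ Y ω = 2} := by
    intro G hG k
    have h := pr_split μ Y hY hYbin {ω | G ω = k} (meas_eq G hG k)
    have e1 : {ω | G ω = k} ∩ {ω | Y ω = 1} = {ω | G ω = k ∧ Y ω = 1} := rfl
    have e2 : {ω | G ω = k} ∩ {ω | Y ω = 2} = {ω | G ω = k ∧ Y ω = 2} := rfl
    rw [e1, e2] at h; exact h
  -- splitting {Y = y} over a binary G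
  have hYsplit : ∀ (G : Ω → ℕ), Measurable G → IsBinaryLabel G → ∀ y : ℕ,
      pr μ {ω | G ω = 1 ∧ Y ω = y} + pr μ {ω | G ω = 2 ∧ Y ω = y} = pr μ {ω | Y ω = y} := by
    intro G hG hGbin y
    have h := pr_split μ G hG hGbin {ω | Y ω = y} (meas_eq Y hY y)
    have e1 : {ω | Y ω = y} ∩ {ω | G ω = 1} = {ω | G ω = 1 ∧ Y ω = y} := by
      ext ω; exact and_comm
    have e2 : {ω | Y ω = y} ∩ {ω | G ω = 2} = {ω | G ω = 2 ∧ Y ω = y} := by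
      ext ω; exact and_comm
    rw [e1, e2] at h; linarith
  -- conditional independence ⇒ joint factorization
  have hjoint : ∀ k l y : ℕ, k ∈ ({1,2} : Set ℕ) → l ∈ ({1,2} : Set ℕ) → y ∈ ({1,2} : Set ℕ) →
      pr μ {ω | F ω = k ∧ F' ω = l ∧ Y ω = y} =
        pr μ {ω | F ω = k ∧ Y ω = y} * pr μ {ω | F' ω = l ∧ Y ω = y} / pr μ {ω | Y ω = y} := by
    intro k l y hk hl hy
    have hyne : pr μ {ω | Y ω = y} ≠ 0 := by
      rw [Set.mem_insert_iff, Set.mem_singleton_iff] at hy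
      rcases hy with hy | hy <;> subst hy
      · exact hpne
      · exact hqne
    have h := hci k l y hk hl hy
    field_simp at h ⊢
    apply mul_right_cancel₀ hyne
    linear_combination (pr μ {ω | Y ω = y}) * h
  -- pairwise joints split over Y
  have hpairsplit : ∀ k l : ℕ,
      pr μ {ω | F ω = k ∧ F' ω = l} =
        pr μ {ω | F ω = k ∧ F' ω = l ∧ Y ω = 1} + pr μ {ω | F ω = k ∧ F' ω = l ∧ Y ω = 2} := by
    intro k l
    have h := pr_split μ Y hY hYbin {ω | F ω = k ∧ F' ω = l}
      ((meas_eq F hF k).inter (meas_eq F' hF' l))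
    have e1 : {ω | F ω = k ∧ F' ω = l} ∩ {ω | Y ω = 1} = {ω | F ω = k ∧ F' ω = l ∧ Y ω = 1} := by
      ext ω; exact and_assoc
    have e2 : {ω | F ω = k ∧ F' ω = l} ∩ {ω | Y ω = 2} = {ω | F ω = k ∧ F' ω = l ∧ Y ω = 2} := by
      ext ω; exact and_assoc
    rw [e1, e2] at h; exact h
  -- agreement events
  have hagree : ∀ (G : Ω → ℕ), Measurable G → IsBinaryLabel G →
      pr μ {ω | F ω = G ω} = pr μ {ω | F ω = 1 ∧ G ω = 1} + pr μ {ω | F ω = 2 ∧ G ω = 2} := by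
    intro G hG hGbin
    have hset : {ω | F ω = G ω} = {ω | F ω = 1 ∧ G ω = 1} ∪ {ω | F ω = 2 ∧ G ω = 2} := by
      ext ω
      rcases hFbin ω with h1 | h1 <;> rcases hGbin ω with h2 | h2 <;>
        simp [Set.mem_setOf_eq, h1, h2]
    have hd : Disjoint {ω | F ω = 1 ∧ G ω = 1} {ω | F ω = 2 ∧ G ω = 2} := by
      rw [Set.disjoint_left]; rintro ω ⟨h1, _⟩ ⟨h2, _⟩; omega
    rw [hset]
    exact pr_union_disj μ _ _ (mpair F G hF hG 2 2) hd
  -- abbreviations for numbers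
  have m1 : (1 : ℕ) ∈ ({1,2} : Set ℕ) := by simp
  have m2 : (2 : ℕ) ∈ ({1,2} : Set ℕ) := by simp
  have key := ca_algebra (pr μ {ω | Y ω = 1}) (pr μ {ω | Y ω = 2})
    (pr μ {ω | F ω = 1 ∧ Y ω = 1}) (pr μ {ω | F ω = 1 ∧ Y ω = 2})
    (pr μ {ω | F ω = 2 ∧ Y ω = 1}) (pr μ {ω | F ω = 2 ∧ Y ω = 2})
    (pr μ {ω | F' ω = 1 ∧ Y ω = 1}) (pr μ {ω | F' ω = 1 ∧ Y ω = 2})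
    (pr μ {ω | F' ω = 2 ∧ Y ω = 1}) (pr μ {ω | F' ω = 2 ∧ Y ω = 2})
    hpne hqne hpq (hYsplit F hF hFbin 1) (hYsplit F hF hFbin 2)
    (hYsplit F' hF' hF'bin 1) (hYsplit F' hF' hF'bin 2)
  unfold caScore fnr fpr
  rw [hagree F' hF' hF'bin, hagree Y hY hYbin,
    hpairsplit 1 1, hpairsplit 2 2,
    hjoint 1 1 1 m1 m1 m1, hjoint 1 1 2 m1 m1 m2,
    hjoint 2 2 1 m2 m2 m1, hjoint 2 2 2 m2 m2 m2,
    hmarg F hF 1, hmarg F hF 2, hmarg F' hF' 1, hmarg F' hF' 2]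
  linear_combination key
end Aux

/-- if the survey hypothesis `F'` is conditionally independent of both
market hypotheses `F_t`, `F_{t−1}` given `Y` and is Bayesian informative, then the
expected market payment satisfies
`S̄(F_t,F') − S̄(F_{t−1},F') = (1 − FNR(F') − FPR(F')) · (S̄(F_t,Y) − S̄(F_{t−1},Y))`;
in particular the payment is positive / zero / negative exactly when the contribution
improves / ties / degrades the expected score measured against the ground truth. -/

theorem market_closing_with_survey_incentive_compatible
    {Ω : Type*} [MeasurableSpace Ω] (μ : Measure Ω) [IsProbabilityMeasure μ]
    (F' Ft Ftm1 Y : Ω → ℕ)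
    (hF'meas : Measurable F') (hFtmeas : Measurable Ft)
    (hFtm1meas : Measurable Ftm1) (hYmeas : Measurable Y)
    (hF'bin : IsBinaryLabel F') (hFtbin : IsBinaryLabel Ft)
    (hFtm1bin : IsBinaryLabel Ftm1) (hYbin : IsBinaryLabel Y)
    (hY1pos : 0 < pr μ {ω | Y ω = 1}) (hY1lt : pr μ {ω | Y ω = 1} < 1)
    (hciT : CondIndepGiven μ Ft F' Y)
    (hciTm1 : CondIndepGiven μ Ftm1 F' Y)
    (hinf : 0 < 1 - fnr μ F' Y - fpr μ F' Y) :
    caScore μ Ft F' - caScore μ Ftm1 F' =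
        (1 - fnr μ F' Y - fpr μ F' Y) * (caScore μ Ft Y - caScore μ Ftm1 Y) ∧
      (0 < caScore μ Ft F' - caScore μ Ftm1 F' ↔ caScore μ Ftm1 Y < caScore μ Ft Y) ∧
      (caScore μ Ft F' - caScore μ Ftm1 F' = 0 ↔ caScore μ Ft Y = caScore μ Ftm1 Y) ∧
      (caScore μ Ft F' - caScore μ Ftm1 F' < 0 ↔ caScore μ Ft Y < caScore μ Ftm1 Y) := by
  have e1 := ca_factor μ Ft F' Y hFtmeas hF'meas hYmeas hFtbin hF'bin hYbin hY1pos hY1lt hciT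
  have e2 := ca_factor μ Ftm1 F' Y hFtm1meas hF'meas hYmeas hFtm1bin hF'bin hYbin hY1pos hY1lt hciTm1
  have heq : caScore μ Ft F' - caScore μ Ftm1 F' =
      (1 - fnr μ F' Y - fpr μ F' Y) * (caScore μ Ft Y - caScore μ Ftm1 Y) := by
    rw [e1, e2]; ring
  refine ⟨heq, ?_, ?_, ?_⟩
  · rw [heq]
    constructor
    · intro h; nlinarith
    · intro h; nlinarith
  · rw [heq, mul_eq_zero, or_iff_right hinf.ne', sub_eq_zero]
  · rw [heq]
    constructor
    · intro h; nlinarith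
    · intro h; nlinarith
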